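/- Let K be a field, N ≥ 3, and R = K[x_1,x_2,x_3,y_0,...,y_N]. Let I = (x_1^2, x_1x_2, x_1x_3, x_1y_0 + x_2^N, x_1y_1 + x_2^{N-1}x_3, ..., x_1y_N + x_3^N). Then y_0 is a nonzerodivisor on R/I. -/

import Mathlib

open MvPolynomial

/-- The variables `x₁, x₂, x₃` of `K[x₁,x₂,x₃,y₀,…,y_N]`. -/
noncomputable def xv {K : Type*} [Field K] {N : ℕ} (i : Fin 3) :
    MvPolynomial (Fin 3 ⊕ Fin (N + 1)) K :=
  X (Sum.inl i)

/-- The variables `y₀, …, y_N` of `K[x₁,x₂,x₃,y₀,…,y_N]`. -/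
noncomputable def yv {K : Type*} [Field K] {N : ℕ} (j : Fin (N + 1)) :
    MvPolynomial (Fin 3 ⊕ Fin (N + 1)) K :=
  X (Sum.inr j)

/-- The ideal `I = (x₁², x₁x₂, x₁x₃, x₁y₀ + x₂^N, …, x₁y_N + x₃^N)`. -/
noncomputable def exIdeal (K : Type*) [Field K] (N : ℕ) :
    Ideal (MvPolynomial (Fin 3 ⊕ Fin (N + 1)) K) :=
  Ideal.span ({xv 0 ^ 2, xv 0 * xv 1, xv 0 * xv 2} ∪
    Set.range (fun j : Fin (N + 1) =>
      xv 0 * yv j + xv 1 ^ (N - (j : ℕ)) * xv 2 ^ (j : ℕ)))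

noncomputable section S9aux

namespace S9

variable {K : Type*} [Field K] {N : ℕ}

/-- exponent of x₁ -/
def e1 : Fin 3 →₀ ℕ := Finsupp.single 0 1

/-- exponent of x₂^{N-j} x₃^j -/
def dj (N : ℕ) (j : Fin (N + 1)) : Fin 3 →₀ ℕ :=
  Finsupp.single 1 (N - (j : ℕ)) + Finsupp.single 2 (j : ℕ)

lemma dj_apply0 (j : Fin (N + 1)) : dj N j 0 = 0 := by
  simp [dj, Finsupp.single_apply]

lemma dj_apply1 (j : Fin (N + 1)) : dj N j 1 = N - (j : ℕ) := by
  simp [dj, Finsupp.single_apply]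

lemma dj_apply2 (j : Fin (N + 1)) : dj N j 2 = (j : ℕ) := by
  simp [dj, Finsupp.single_apply]

lemma e1_apply0 : (e1 : Fin 3 →₀ ℕ) 0 = 1 := by simp [e1]
lemma e1_apply1 : (e1 : Fin 3 →₀ ℕ) 1 = 0 := by simp [e1]
lemma e1_apply2 : (e1 : Fin 3 →₀ ℕ) 2 = 0 := by simp [e1]

lemma not_e1_le_dj (j : Fin (N + 1)) : ¬ e1 ≤ dj N j := by
  intro h
  have := h 0
  rw [e1_apply0, dj_apply0] at this
  omega

lemma not_dj_le_e1 (hN : 1 ≤ N) (j : Fin (N + 1)) : ¬ dj N j ≤ e1 := by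
  intro h
  have h1 := h 1
  have h2 := h 2
  rw [dj_apply1, e1_apply1] at h1
  rw [dj_apply2, e1_apply2] at h2
  have := j.isLt
  omega

lemma dj_le_dj {j k : Fin (N + 1)} (h : dj N j ≤ dj N k) : j = k := by
  have h1 := h 1
  have h2 := h 2
  rw [dj_apply1, dj_apply1] at h1
  rw [dj_apply2, dj_apply2] at h2
  have hj := j.isLt
  have hk := k.isLt
  exact Fin.ext (by omega)

variable (K N) in
abbrev P := MvPolynomial (Fin 3) (MvPolynomial (Fin (N + 1)) K)

/-- the monomial x₂^{N-j} x₃^j -/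
def mj (j : Fin (N + 1)) : P K N := X 1 ^ (N - (j : ℕ)) * X 2 ^ (j : ℕ)

lemma mj_eq (j : Fin (N + 1)) : (mj j : P K N) = monomial (dj N j) 1 := by
  rw [mj, X_pow_eq_monomial, X_pow_eq_monomial, monomial_mul, one_mul, dj]

variable (K N) in
def M : Ideal (P K N) := Ideal.span (Set.range (mj (K := K) (N := N)))

variable (N) in
def Good (e : Fin 3 →₀ ℕ) : Prop := ∃ j : Fin (N + 1), dj N j ≤ e

variable (K N) in
def Z : Ideal (P K N) where
  carrier := { z | ∀ e, ¬ Good N e → coeff e z = 0 }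
  zero_mem' := fun e _ => by simp
  add_mem' := by
    intro a b ha hb e he
    rw [coeff_add, ha e he, hb e he, add_zero]
  smul_mem' := by
    intro c z hz e he
    rw [smul_eq_mul, coeff_mul]
    apply Finset.sum_eq_zero
    rintro ⟨a, b⟩ hab
    rw [Finset.HasAntidiagonal.mem_antidiagonal] at hab
    by_cases hb : Good N b
    · exact absurd (by obtain ⟨j, hj⟩ := hb; exact ⟨j, hj.trans (hab ▸ le_add_self)⟩) he
    · rw [hz b hb, mul_zero]

lemma M_le_Z : M K N ≤ Z K N := by
  rw [M, Ideal.span_le]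
  rintro _ ⟨j, rfl⟩ e he
  rw [mj_eq, coeff_monomial]
  split_ifs with h
  · exact absurd ⟨j, h ▸ le_rfl⟩ he
  · rfl

lemma Z_le_M : Z K N ≤ M K N := by
  intro z hz
  rw [← support_sum_monomial_coeff z]
  apply Ideal.sum_mem
  intro e hesup
  have hne : coeff e z ≠ 0 := mem_support_iff.mp hesup
  by_cases hg : Good N e
  · obtain ⟨j, hj⟩ := hg
    have : (monomial e (coeff e z) : P K N) = monomial (e - dj N j) (coeff e z) * mj j := by
      rw [mj_eq, monomial_mul, mul_one, tsub_add_cancel_of_le hj]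
    rw [this]
    exact Ideal.mul_mem_left _ _ (Ideal.subset_span ⟨j, rfl⟩)
  · exact absurd (hz e hg) hne

lemma regular_M {z : P K N} (h : C (X 0) * z ∈ M K N) : z ∈ M K N := by
  apply Z_le_M
  intro e he
  have := M_le_Z h e he
  rw [coeff_C_mul] at this
  exact (mul_eq_zero.mp this).resolve_left (X_ne_zero 0)

variable (K N) in
def Phi : P K N →ₗ[MvPolynomial (Fin (N + 1)) K] MvPolynomial (Fin (N + 1)) K :=
  lcoeff _ e1 - ∑ j : Fin (N + 1),
    (X j : MvPolynomial (Fin (N + 1)) K) • lcoeff (MvPolynomial (Fin (N + 1)) K) (dj N j)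

lemma Phi_apply (p : P K N) :
    Phi K N p = coeff e1 p - ∑ j : Fin (N + 1), X j * coeff (dj N j) p := by
  simp [Phi, lcoeff_apply, smul_eq_mul]

variable (K N) in
def pii : P K N →ₐ[MvPolynomial (Fin (N + 1)) K] P K N :=
  aeval (fun i : Fin 3 => if i = 0 then 0 else X i)

lemma pii_X0 : pii K N (X 0) = 0 := by simp [pii]
lemma pii_X1 : pii K N (X 1) = X 1 := by simp [pii]
lemma pii_X2 : pii K N (X 2) = X 2 := by simp [pii]
lemma pii_C (a : MvPolynomial (Fin (N + 1)) K) : pii K N (C a) = C a := by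
  simp [pii, algebraMap_eq]

lemma pii_pii (p : P K N) : pii K N (pii K N p) = pii K N p := by
  have : (pii K N).comp (pii K N) = pii K N := by
    rw [pii, comp_aeval]
    congr 1
    funext i
    by_cases h : i = 0 <;> simp [h, pii, algebraMap_eq]
  calc pii K N (pii K N p) = ((pii K N).comp (pii K N)) p := rfl
    _ = pii K N p := by rw [this]

/-- the generators downstairs -/
def fj (j : Fin (N + 1)) : P K N := X 0 * C (X j) + mj j

variable (K N) in
def gens : Set (P K N) :=
  {X 0 ^ 2, X 0 * X 1, X 0 * X 2} ∪ Set.range (fj (K := K) (N := N))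

variable (K N) in
def I' : Ideal (P K N) := Ideal.span (gens K N)

-- Phi vanishing on multiples of generators

lemma Phi_mul_monomial (p : P K N) (s : Fin 3 →₀ ℕ) (c : MvPolynomial (Fin (N + 1)) K)
    (h1 : ¬ s ≤ e1) (h2 : ∀ k : Fin (N + 1), ¬ s ≤ dj N k) :
    Phi K N (p * monomial s c) = 0 := by
  rw [Phi_apply, coeff_mul_monomial', if_neg h1]
  rw [Finset.sum_eq_zero, sub_zero]
  intro k _
  rw [coeff_mul_monomial', if_neg (h2 k), mul_zero]

lemma Phi_mul_X0X0 (p : P K N) : Phi K N (p * (X 0 ^ 2)) = 0 := by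
  rw [X_pow_eq_monomial]
  apply Phi_mul_monomial
  · intro h; have := h 0; rw [e1_apply0, Finsupp.single_apply] at this; simp at this
  · intro k h; have := h 0; rw [dj_apply0, Finsupp.single_apply] at this; simp at this

lemma Phi_mul_X0X1 (p : P K N) : Phi K N (p * (X 0 * X 1)) = 0 := by
  have : (X 0 * X 1 : P K N) = monomial (Finsupp.single 0 1 + Finsupp.single 1 1) 1 := by
    rw [← pow_one (X 0), ← pow_one (X 1), X_pow_eq_monomial, X_pow_eq_monomial, monomial_mul, one_mul]
  rw [this]
  apply Phi_mul_monomial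
  · intro h; have := h 1; rw [e1_apply1] at this; simp [Finsupp.single_apply] at this
  · intro k h; have := h 0; rw [dj_apply0] at this; simp [Finsupp.single_apply] at this

lemma Phi_mul_X0X2 (p : P K N) : Phi K N (p * (X 0 * X 2)) = 0 := by
  have : (X 0 * X 2 : P K N) = monomial (Finsupp.single 0 1 + Finsupp.single 2 1) 1 := by
    rw [← pow_one (X 0), ← pow_one (X 2), X_pow_eq_monomial, X_pow_eq_monomial, monomial_mul, one_mul]
  rw [this]
  apply Phi_mul_monomial
  · intro h; have := h 2; rw [e1_apply2] at this; simp [Finsupp.single_apply] at this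
  · intro k h; have := h 0; rw [dj_apply0] at this; simp [Finsupp.single_apply] at this

lemma Phi_mul_fj (hN : 1 ≤ N) (p : P K N) (j : Fin (N + 1)) :
    Phi K N (p * fj j) = 0 := by
  have hX0C : (X 0 * C (X j) : P K N) = monomial e1 (X j) := by
    rw [← pow_one (X 0), X_pow_eq_monomial, e1, mul_comm, C_mul_monomial, mul_one]
  rw [fj, mul_add, map_add, hX0C, mj_eq]
  have h1 : Phi K N (p * monomial e1 (X j)) = coeff 0 p * X j := by
    rw [Phi_apply, coeff_mul_monomial', if_pos le_rfl, tsub_self]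
    rw [Finset.sum_eq_zero, sub_zero]
    intro k _
    rw [coeff_mul_monomial', if_neg (not_e1_le_dj k), mul_zero]
  have h2 : Phi K N (p * monomial (dj N j) 1) = - (X j * coeff 0 p) := by
    rw [Phi_apply, coeff_mul_monomial', if_neg (not_dj_le_e1 hN j)]
    rw [Finset.sum_eq_single j]
    · rw [coeff_mul_monomial', if_pos le_rfl, tsub_self, mul_one, zero_sub]
    · intro k _ hk
      rw [coeff_mul_monomial', if_neg, mul_zero]
      intro hle
      exact hk (dj_le_dj hle).symm
    · intro h; exact absurd (Finset.mem_univ j) h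
  rw [h1, h2]
  ring

lemma Phi_eq_zero_of_mem (hN : 1 ≤ N) {p : P K N} (hp : p ∈ I' K N) : Phi K N p = 0 := by
  have H : ∀ a : P K N, Phi K N (a * p) = 0 := by
    refine Submodule.span_induction ?_ ?_ ?_ ?_ hp
    · rintro x (hx | ⟨j, rfl⟩)
      · intro a
        rcases hx with rfl | rfl | rfl
        · exact Phi_mul_X0X0 a
        · exact Phi_mul_X0X1 a
        · exact Phi_mul_X0X2 a
      · intro a
        exact Phi_mul_fj hN a j
    · intro a; rw [mul_zero, map_zero]
    · intro x y _ _ hx hy a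
      rw [mul_add, map_add, hx a, hy a, add_zero]
    · intro c x _ hx a
      rw [smul_eq_mul, ← mul_assoc, hx (a * c)]
  have := H 1
  rwa [one_mul] at this

lemma pii_mj (j : Fin (N + 1)) : pii K N (mj j) = mj j := by
  rw [mj, map_mul, map_pow, map_pow, pii_X1, pii_X2]

lemma pii_fj (j : Fin (N + 1)) : pii K N (fj j) = mj j := by
  rw [fj, map_add, map_mul, pii_X0, pii_C, zero_mul, zero_add, pii_mj]

lemma pii_mem_M_of_mem {p : P K N} (hp : p ∈ I' K N) : pii K N p ∈ M K N := by
  have : I' K N ≤ Ideal.comap (pii K N : P K N →+* P K N) (M K N) := by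
    rw [I', Ideal.span_le]
    rintro x (hx | ⟨j, rfl⟩)
    · have hz : pii K N x = 0 := by
        rcases hx with rfl | rfl | rfl
        · rw [map_pow, pii_X0]; ring
        · rw [map_mul, pii_X0, zero_mul]
        · rw [map_mul, pii_X0, zero_mul]
      show pii K N x ∈ M K N
      rw [hz]; exact (M K N).zero_mem
    · show pii K N (fj j) ∈ M K N
      rw [pii_fj]
      exact Ideal.subset_span ⟨j, rfl⟩
  exact this hp

lemma exists_X0_factor (u : P K N) : ∃ w : P K N, u = pii K N u + X 0 * w := by
  induction u using MvPolynomial.induction_on with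
  | C a => exact ⟨0, by rw [pii_C, mul_zero, add_zero]⟩
  | add p q hp hq =>
    obtain ⟨wp, hwp⟩ := hp
    obtain ⟨wq, hwq⟩ := hq
    refine ⟨wp + wq, ?_⟩
    rw [map_add, mul_add]
    calc p + q = (pii K N p + X 0 * wp) + (pii K N q + X 0 * wq) := by rw [← hwp, ← hwq]
      _ = pii K N p + pii K N q + (X 0 * wp + X 0 * wq) := by ring
  | mul_X p i hp =>
    obtain ⟨w, hw⟩ := hp
    by_cases h : i = 0
    · subst h
      refine ⟨p, ?_⟩
      rw [map_mul, pii_X0, mul_zero, zero_add]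
      ring
    · refine ⟨w * X i, ?_⟩
      have hXi : pii K N (X i) = X i := by simp [pii, h]
      rw [map_mul, hXi]
      calc p * X i = (pii K N p + X 0 * w) * X i := by rw [← hw]
        _ = pii K N p * X i + X 0 * (w * X i) := by ring

lemma sub_C_constantCoeff_mem (w : P K N) :
    w - C (constantCoeff w) ∈ Ideal.span (Set.range (X : Fin 3 → P K N)) := by
  induction w using MvPolynomial.induction_on with
  | C a => rw [constantCoeff_C, sub_self]; exact Ideal.zero_mem _
  | add p q hp hq =>
    have : p + q - C (constantCoeff (p + q)) =
        (p - C (constantCoeff p)) + (q - C (constantCoeff q)) := by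
      rw [map_add, map_add]; ring
    rw [this]
    exact Ideal.add_mem _ hp hq
  | mul_X p i _ =>
    have : constantCoeff (p * X i) = 0 := by
      rw [map_mul, constantCoeff_X, mul_zero]
    rw [this, map_zero, sub_zero]
    exact Ideal.mul_mem_left _ _ (Ideal.subset_span ⟨i, rfl⟩)

lemma constantCoeff_of_Phi (hN : 1 ≤ N) (w : P K N) (h : Phi K N (X 0 * w) = 0) :
    constantCoeff w = 0 := by
  have hX0 : (X 0 : P K N) = monomial e1 1 := by
    rw [← pow_one (X 0), X_pow_eq_monomial, e1]
  rw [mul_comm, hX0, Phi_apply, coeff_mul_monomial', if_pos le_rfl, tsub_self] at h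
  rw [Finset.sum_eq_zero, sub_zero, mul_one] at h
  · rw [constantCoeff_eq]; exact h
  · intro k _
    rw [coeff_mul_monomial', if_neg (not_e1_le_dj k), mul_zero]

lemma X0_mul_X_mem (i : Fin 3) : X 0 * X i ∈ I' K N := by
  apply Ideal.subset_span
  fin_cases i
  · left; left; rw [sq]; congr 1
  · left; right; left; congr 1
  · left; right; right; congr 1

lemma mem_of_tests (hN : 1 ≤ N) {p : P K N}
    (h1 : pii K N p ∈ M K N) (h2 : Phi K N p = 0) : p ∈ I' K N := by
  rw [M] at h1
  obtain ⟨c, hc⟩ := Ideal.mem_span_range_iff_exists_fun.mp h1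
  set c' : Fin (N + 1) → P K N := fun j => pii K N (c j) with hc'def
  have hc' : ∑ j, c' j * mj j = pii K N p := by
    have := congrArg (pii K N) hc
    rw [map_sum, pii_pii] at this
    simpa only [map_mul, pii_mj] using this
  set u := p - ∑ j, c' j * fj j with hu
  have hpiu : pii K N u = 0 := by
    rw [hu, map_sub, map_sum]
    have : ∀ j ∈ Finset.univ, pii K N (c' j * fj j) = c' j * mj j := by
      intro j _
      rw [map_mul, pii_fj, hc'def]
      rw [pii_pii]
    rw [Finset.sum_congr rfl this, hc', sub_self]
  have hPhiu : Phi K N u = 0 := by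
    rw [hu, map_sub, h2, map_sum, Finset.sum_eq_zero, sub_zero]
    intro j _
    exact Phi_mul_fj hN (c' j) j
  obtain ⟨w, hw⟩ := exists_X0_factor u
  rw [hpiu, zero_add] at hw
  have hcc : constantCoeff w = 0 := by
    apply constantCoeff_of_Phi hN
    rw [← hw, hPhiu]
  have hwmem : w ∈ Ideal.span (Set.range (X : Fin 3 → P K N)) := by
    have := sub_C_constantCoeff_mem w
    rwa [hcc, map_zero, sub_zero] at this
  obtain ⟨a, ha⟩ := Ideal.mem_span_range_iff_exists_fun.mp hwmem
  have humem : u ∈ I' K N := by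
    rw [hw, ← ha, Finset.mul_sum]
    apply Ideal.sum_mem
    intro i _
    have : X 0 * (a i * X i) = a i * (X 0 * X i) := by ring
    rw [this]
    exact Ideal.mul_mem_left _ _ (X0_mul_X_mem i)
  have : p = u + ∑ j, c' j * fj j := by rw [hu]; ring
  rw [this]
  refine Ideal.add_mem _ humem (Ideal.sum_mem _ ?_)
  intro j _
  exact Ideal.mul_mem_left _ _ (Ideal.subset_span (Or.inr ⟨j, rfl⟩))

/-- The key downstairs statement. -/
lemma main_down (hN : 1 ≤ N) {q : P K N} (h : C (X 0) * q ∈ I' K N) : q ∈ I' K N := by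
  apply mem_of_tests hN
  · apply regular_M
    have := pii_mem_M_of_mem h
    rwa [map_mul, pii_C] at this
  · have := Phi_eq_zero_of_mem hN h
    rw [← smul_eq_C_mul, map_smul, smul_eq_mul] at this
    exact (mul_eq_zero.mp this).resolve_left (X_ne_zero 0)

lemma mem_span_image_iff {R S : Type*} [CommRing R] [CommRing S] (e : R ≃+* S)
    (s : Set R) (x : R) : x ∈ Ideal.span s ↔ e x ∈ Ideal.span (⇑e '' s) := by
  constructor
  · intro hx
    have := Ideal.mem_map_of_mem (e : R →+* S) hx
    rwa [Ideal.map_span] at this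
  · intro hx
    have := Ideal.mem_map_of_mem (e.symm : S →+* R) hx
    rw [Ideal.map_span] at this
    simpa [Set.image_image] using this

end S9

end S9aux

/-- `y₀` is a nonzerodivisor on `R/I`. -/
theorem stmt9 {K : Type*} [Field K] (N : ℕ) (hN : 3 ≤ N)
    (r : MvPolynomial (Fin 3 ⊕ Fin (N + 1)) K) (hr : yv 0 * r ∈ exIdeal K N) :
    r ∈ exIdeal K N := by
  classical
  have hN1 : 1 ≤ N := by omega
  set e : MvPolynomial (Fin 3 ⊕ Fin (N + 1)) K ≃+* S9.P K N :=
    (sumAlgEquiv K (Fin 3) (Fin (N + 1))).toRingEquiv with hedef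
  have hEinl : ∀ i : Fin 3, e (xv i) = X i := fun i => sumAlgEquiv_X_inl _ _ _ i
  have hEinr : ∀ j : Fin (N + 1), e (yv j) = C (X j) := fun j => sumAlgEquiv_X_inr _ _ _ j
  have himg : ⇑e '' ({xv 0 ^ 2, xv 0 * xv 1, xv 0 * xv 2} ∪
      Set.range (fun j : Fin (N + 1) =>
        xv 0 * yv j + xv 1 ^ (N - (j : ℕ)) * xv 2 ^ (j : ℕ))) = S9.gens K N := by
    rw [Set.image_union, Set.image_insert_eq, Set.image_insert_eq, Set.image_singleton,
      ← Set.range_comp]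
    have h1 : e (xv 0 ^ 2) = X 0 ^ 2 := by rw [map_pow, hEinl]
    have h2 : e (xv 0 * xv 1) = X 0 * X 1 := by rw [map_mul, hEinl, hEinl]
    have h3 : e (xv 0 * xv 2) = X 0 * X 2 := by rw [map_mul, hEinl, hEinl]
    have h4 : (⇑e ∘ fun j : Fin (N + 1) =>
        xv 0 * yv j + xv 1 ^ (N - (j : ℕ)) * xv 2 ^ (j : ℕ)) =
        S9.fj (K := K) (N := N) := by
      funext j
      show e (xv 0 * yv j + xv 1 ^ (N - (j : ℕ)) * xv 2 ^ (j : ℕ)) = S9.fj j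
      rw [map_add, map_mul, map_mul, map_pow, map_pow, hEinl, hEinl, hEinl, hEinr]
      rfl
    rw [h1, h2, h3, h4, S9.gens]
  rw [exIdeal, S9.mem_span_image_iff e, himg] at hr ⊢
  have hmul : e (yv 0 * r) = C (X 0) * e r := by rw [map_mul, hEinr]
  rw [hmul] at hr
  exact S9.main_down hN1 hr
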